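/- The NLS derivations commute pairwise: for all i, j ≥ 0, D_i ∘ D_j = D_j ∘ D_i as derivations of 𝒜[ε,ε⁻¹]. -/

import Mathlib

set_option synthInstance.maxHeartbeats 1000000
set_option maxHeartbeats 1000000

noncomputable section

open scoped BigOperators

/-- Index set of the generators `qᵢ, rᵢ` of 𝒜. -/
inductive NLSVar : Type
  | q : ℕ → NLSVar
  | r : ℕ → NLSVar

/-- 𝒜 = ℂ[q₀, r₀, q₁, r₁, …]. -/
abbrev NLSA : Type := MvPolynomial NLSVar ℂ

/-- 𝒜[ε, ε⁻¹], as Laurent polynomials in ε over 𝒜. -/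
abbrev NLSE : Type := LaurentPolynomial NLSA

instance : CommRing NLSE := inferInstance
instance : Algebra ℂ NLSE := inferInstance

/-- The generator qᵢ viewed in 𝒜[ε,ε⁻¹]. -/
def qv (i : ℕ) : NLSE := LaurentPolynomial.C (MvPolynomial.X (NLSVar.q i))

/-- The generator rᵢ viewed in 𝒜[ε,ε⁻¹]. -/
def rv (i : ℕ) : NLSE := LaurentPolynomial.C (MvPolynomial.X (NLSVar.r i))

/-- ε ∈ 𝒜[ε,ε⁻¹]. -/
def eps : NLSE := LaurentPolynomial.T 1

/-- ε⁻¹ ∈ 𝒜[ε,ε⁻¹]. -/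
def epsInv : NLSE := LaurentPolynomial.T (-1)

/-- Membership in the subring 𝒜[ε] ⊆ 𝒜[ε,ε⁻¹]: no negative powers of ε. -/
def inAE (x : NLSE) : Prop := ∀ n : ℤ, n < 0 → (show ℤ →₀ NLSA from x.coeff) n = 0

/-- The Laurent-series ring 𝒜[ε,ε⁻¹][[ξ⁻¹]][ξ]; the Hahn-series exponent `n`
records the power of ξ⁻¹. -/
abbrev NLSL : Type := LaurentSeries NLSE

instance : CommRing NLSL := inferInstance
instance : Algebra ℂ NLSL := inferInstance

/-- ξ as a Laurent series in ξ⁻¹. -/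
def xiL : NLSL := HahnSeries.single (-1 : ℤ) 1

/-- Apply a zero-preserving map to all coefficients of a Laurent series. -/
def coeffMap {R S : Type*} [Zero R] [Zero S] (f : ZeroHom R S)
    (x : HahnSeries ℤ R) : HahnSeries ℤ S where
  coeff n := f (x.coeff n)
  isPWO_support' := x.isPWO_support'.mono (by
    intro n hn
    simp only [Function.mem_support, ne_eq] at hn ⊢
    exact fun h => hn (by rw [h, map_zero]))

/-- The derivation ∂, applied coefficientwise to a Laurent series in ξ⁻¹. -/
def dmap (d : Derivation ℂ NLSE NLSE) : NLSL → NLSL :=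
  coeffMap ⟨fun x => d x, map_zero d⟩

/-- `∂` is the (unique) derivation of 𝒜[ε,ε⁻¹] with ∂(qᵢ)=qᵢ₊₁, ∂(rᵢ)=rᵢ₊₁, ∂(ε)=0. -/
def IsDel (del : Derivation ℂ NLSE NLSE) : Prop :=
  (∀ i, del (qv i) = qv (i + 1)) ∧ (∀ i, del (rv i) = rv (i + 1)) ∧ del eps = 0

/-- The constant embedding 𝒜[ε,ε⁻¹] → 𝒜[ε,ε⁻¹][[ξ⁻¹]][ξ]. -/
def CL (x : NLSE) : NLSL := HahnSeries.C x

/-- The matrix U(ξ) = [[−ξ, −q],[r, ξ]]. -/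
def Umat : Matrix (Fin 2) (Fin 2) NLSL :=
  !![-xiL, -(CL (qv 0)); CL (rv 0), xiL]

/-- The matrix [[2+a, b],[c, −a]]. -/
def Rmat (a b c : NLSL) : Matrix (Fin 2) (Fin 2) NLSL := !![2 + a, b; c, -a]

/-- `a, b, c` are the entries of the (unique) basic matrix resolvent
R(ξ) = [[2+a(ξ), b(ξ)],[c(ξ), −a(ξ)]]. -/
def IsMR (del : Derivation ℂ NLSE NLSE) (a b c : NLSL) : Prop :=
  (∀ n : ℤ, n ≤ 0 → a.coeff n = 0) ∧
  (∀ n : ℤ, n ≤ 0 → b.coeff n = 0) ∧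
  (∀ n : ℤ, n ≤ 0 → c.coeff n = 0) ∧
  (∀ n : ℤ, inAE (a.coeff n)) ∧ (∀ n : ℤ, inAE (b.coeff n)) ∧ (∀ n : ℤ, inAE (c.coeff n)) ∧
  CL eps • (Rmat a b c).map (dmap del)
      + (Umat * Rmat a b c - Rmat a b c * Umat) = 0 ∧
  (Rmat a b c).det = 0

/-- A_j, the ξ^{−j−1}-coefficient of a(ξ). -/
def coA (a : NLSL) (j : ℕ) : NLSE := a.coeff (j + 1 : ℤ)

/-- The NLS derivations D_j: derivations of 𝒜[ε,ε⁻¹] commuting with ∂, annihilating ε,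
with D_j(q) = 2^{j+1} ε⁻¹ B_{j+1} and D_j(r) = 2^{j+1} ε⁻¹ C_{j+1}. -/
def IsNLSD (del : Derivation ℂ NLSE NLSE) (b c : NLSL)
    (D : ℕ → Derivation ℂ NLSE NLSE) : Prop :=
  (∀ j x, D j (del x) = del (D j x)) ∧
  (∀ j, D j eps = 0) ∧
  (∀ j, D j (qv 0) = (2 : NLSE) ^ (j + 1) * epsInv * coA b (j + 1)) ∧
  (∀ j, D j (rv 0) = (2 : NLSE) ^ (j + 1) * epsInv * coA c (j + 1))

end
noncomputable section
namespace NLSAux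
open HahnSeries

lemma CL_mul_coeff (u : NLSE) (x : NLSL) (n : ℤ) : (CL u * x).coeff n = u * x.coeff n :=
  HahnSeries.coeff_single_zero_mul

lemma xiL_mul_coeff (x : NLSL) (n : ℤ) : (xiL * x).coeff n = x.coeff (n + 1) := by
  have h := HahnSeries.coeff_single_mul_add (r := (1 : NLSE)) (x := x) (a := n + 1) (b := -1)
  simpa [xiL] using h

/-- series supported in strictly positive exponents (i.e. `O(ξ⁻¹)`). -/
def Pos (x : NLSL) : Prop := ∀ n : ℤ, n ≤ 0 → x.coeff n = 0

lemma mul_coeff_eq_zero {x y : NLSL} (hx : Pos x) {p : ℤ} (hy : ∀ m ≤ p, y.coeff m = 0)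
    {n : ℤ} (hn : n ≤ p + 1) : (x * y).coeff n = 0 := by
  rw [HahnSeries.coeff_mul]
  apply Finset.sum_eq_zero
  rintro ⟨j, k⟩ hjk
  rw [Finset.mem_addAntidiagonal] at hjk
  obtain ⟨hj, hk, hsum⟩ := hjk
  have hj1 : 1 ≤ j := by
    by_contra h
    exact hj (hx j (by omega))
  have : y.coeff k = 0 := hy k (by omega)
  simp [this]

lemma Pos.mul {x y : NLSL} (hx : Pos x) (hy : Pos y) : Pos (x * y) :=
  fun n hn => mul_coeff_eq_zero hx (p := 0) hy (by omega)

lemma mul_coeff_sum {x y : NLSL} (hx : Pos x) (hy : Pos y) (n : ℤ) :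
    (x * y).coeff n = ∑ k ∈ Finset.Ioo (0 : ℤ) n, x.coeff k * y.coeff (n - k) := by
  rw [HahnSeries.coeff_mul]
  have hsub : Finset.antidiagonal x.isPWO_support y.isPWO_support n ⊆
      (Finset.Ioo (0 : ℤ) n).image (fun k => (k, n - k)) := by
    rintro ⟨j, k⟩ h
    rw [Finset.mem_antidiagonal] at h
    obtain ⟨hj, hk, hsum⟩ := h
    have h1 : 1 ≤ j := by by_contra h; exact hj (hx j (by omega))
    have h2 : 1 ≤ k := by by_contra h; exact hk (hy k (by omega))
    refine Finset.mem_image.2 ⟨j, Finset.mem_Ioo.2 (by omega), by simp [show n - j = k by omega]⟩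
  rw [Finset.sum_subset hsub]
  · rw [Finset.sum_image (fun p _ q _ h => by simpa using congrArg Prod.fst h)]
  · rintro ⟨j, k⟩ hmem hnot
    obtain ⟨l, hl, hlk⟩ := Finset.mem_image.1 hmem
    obtain ⟨rfl, rfl⟩ : l = j ∧ n - l = k := by
      constructor <;> [exact congrArg Prod.fst hlk; exact congrArg Prod.snd hlk]
    rw [Finset.mem_antidiagonal] at hnot
    push_neg at hnot
    rcases Classical.em (l ∈ x.support) with hx' | hx'
    · rcases Classical.em (n - l ∈ y.support) with hy' | hy'
      · exact absurd (by omega) (hnot hx' hy')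
      · rw [HahnSeries.mem_support, not_not] at hy'; simp [hy']
    · rw [HahnSeries.mem_support, not_not] at hx'; simp [hx']

end NLSAux
end
noncomputable section
namespace NLSAux
open HahnSeries

@[simp] lemma dmap_coeff (d : Derivation ℂ NLSE NLSE) (x : NLSL) (n : ℤ) :
    (dmap d x).coeff n = d (x.coeff n) := rfl

lemma dmap_ext {x y : NLSL} (h : ∀ n, x.coeff n = y.coeff n) : x = y :=
  HahnSeries.ext (funext h)

lemma dmap_add (d : Derivation ℂ NLSE NLSE) (x y : NLSL) :
    dmap d (x + y) = dmap d x + dmap d y := by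
  apply dmap_ext; intro n
  simp [HahnSeries.coeff_add]

lemma dmap_sub (d : Derivation ℂ NLSE NLSE) (x y : NLSL) :
    dmap d (x - y) = dmap d x - dmap d y := by
  apply dmap_ext; intro n
  simp [HahnSeries.coeff_sub]

lemma dmap_one (d : Derivation ℂ NLSE NLSE) : dmap d (1 : NLSL) = 0 := by
  apply dmap_ext; intro n
  by_cases h : n = 0 <;> simp [HahnSeries.coeff_one, h]

lemma dmap_support (d : Derivation ℂ NLSE NLSE) (x : NLSL) :
    (dmap d x).support ⊆ x.support := by
  intro n hn
  rw [HahnSeries.mem_support] at hn ⊢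
  intro h
  rw [dmap_coeff, h, map_zero] at hn
  exact hn rfl

lemma dmap_mul (d : Derivation ℂ NLSE NLSE) (x y : NLSL) :
    dmap d (x * y) = dmap d x * y + x * dmap d y := by
  apply dmap_ext; intro n
  rw [HahnSeries.coeff_add, dmap_coeff, HahnSeries.coeff_mul,
    HahnSeries.coeff_mul_left' x.isPWO_support (dmap_support d x),
    HahnSeries.coeff_mul_right' y.isPWO_support (dmap_support d y)]
  rw [← Finset.sum_add_distrib, ← Derivation.coeFn_coe d, map_sum]
  apply Finset.sum_congr rfl
  rintro ⟨j, k⟩ _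
  simp [Derivation.leibniz, smul_eq_mul, mul_comm]
  ring

lemma dmap_CL (d : Derivation ℂ NLSE NLSE) (u : NLSE) : dmap d (CL u) = CL (d u) := by
  apply dmap_ext; intro n
  by_cases h : n = 0 <;>
    simp [CL, HahnSeries.C_apply, HahnSeries.coeff_single, h]

lemma dmap_xiL_mul (d : Derivation ℂ NLSE NLSE) (x : NLSL) :
    dmap d (xiL * x) = xiL * dmap d x := by
  apply dmap_ext; intro n
  simp [xiL_mul_coeff]

lemma dmap_CL_mul (d : Derivation ℂ NLSE NLSE) (u : NLSE) (x : NLSL) :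
    dmap d (CL u * x) = CL (d u) * x + CL u * dmap d x := by
  apply dmap_ext; intro n
  rw [dmap_coeff, CL_mul_coeff, HahnSeries.coeff_add, CL_mul_coeff, CL_mul_coeff, dmap_coeff,
    Derivation.leibniz, smul_eq_mul, smul_eq_mul]
  ring

lemma dmap_comm {d e : Derivation ℂ NLSE NLSE} (h : ∀ u, d (e u) = e (d u)) (x : NLSL) :
    dmap d (dmap e x) = dmap e (dmap d x) := by
  apply dmap_ext; intro n
  simp [h]

lemma dmap_pos {d : Derivation ℂ NLSE NLSE} {x : NLSL} (hx : Pos x) : Pos (dmap d x) := by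
  intro n hn
  rw [dmap_coeff, hx n hn, map_zero]

/-- truncation to positive exponents -/
def trunc (x : NLSL) : NLSL where
  coeff n := if 1 ≤ n then x.coeff n else 0
  isPWO_support' := x.isPWO_support'.mono (by
    intro n hn
    simp only [Function.mem_support, ne_eq] at hn ⊢
    intro h
    exact hn (by rw [h, if_neg]; exact fun _ => (hn (by simp [h])).elim))

end NLSAux
end
noncomputable section
namespace NLSAux
open HahnSeries

lemma trunc_coeff (x : NLSL) (n : ℤ) : (trunc x).coeff n = if 1 ≤ n then x.coeff n else 0 := rfl

/-- shifted positive part : `(sh k x).coeff n = x.coeff (n+k)` for `n ≥ 1`, `0` otherwise. -/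
def sh (k : ℤ) (x : NLSL) : NLSL := trunc (HahnSeries.single (-k) (1 : NLSE) * x)

lemma sh_coeff_of_le {k n : ℤ} (x : NLSL) (hn : 1 ≤ n) : (sh k x).coeff n = x.coeff (n + k) := by
  rw [sh, trunc_coeff, if_pos hn]
  have h := HahnSeries.coeff_single_mul_add (r := (1 : NLSE)) (x := x) (a := n + k) (b := -k)
  rw [show n + k + -k = n by ring] at h
  rw [h, one_mul]

lemma sh_coeff_zero {k n : ℤ} (x : NLSL) (hn : n ≤ 0) : (sh k x).coeff n = 0 := by
  rw [sh, trunc_coeff, if_neg (by omega)]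

lemma Pos.sh (k : ℤ) (x : NLSL) : Pos (sh k x) := fun n hn => sh_coeff_zero x hn

lemma sh_add (k : ℤ) (x y : NLSL) : sh k (x + y) = sh k x + sh k y := by
  apply dmap_ext; intro n
  rcases le_or_gt 1 n with h | h
  · simp [sh_coeff_of_le _ h, HahnSeries.coeff_add]
  · simp [sh_coeff_zero (n := n) _ (by omega), HahnSeries.coeff_add]

lemma sh_neg (k : ℤ) (x : NLSL) : sh k (-x) = -(sh k x) := by
  apply dmap_ext; intro n
  rcases le_or_gt 1 n with h | h
  · simp [sh_coeff_of_le _ h]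
  · simp [sh_coeff_zero (n := n) _ (by omega)]

lemma sh_sub (k : ℤ) (x y : NLSL) : sh k (x - y) = sh k x - sh k y := by
  rw [sub_eq_add_neg, sh_add, sh_neg, sub_eq_add_neg]

lemma sh_CL_mul (k : ℤ) (u : NLSE) (x : NLSL) : sh k (CL u * x) = CL u * sh k x := by
  apply dmap_ext; intro n
  rcases le_or_gt 1 n with h | h
  · rw [sh_coeff_of_le _ h, CL_mul_coeff, CL_mul_coeff, sh_coeff_of_le _ h]
  · rw [sh_coeff_zero _ (by omega), CL_mul_coeff, sh_coeff_zero _ (by omega), mul_zero]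

lemma sh_dmap (d : Derivation ℂ NLSE NLSE) (k : ℤ) (x : NLSL) :
    sh k (dmap d x) = dmap d (sh k x) := by
  apply dmap_ext; intro n
  rcases le_or_gt 1 n with h | h
  · rw [sh_coeff_of_le _ h, dmap_coeff, dmap_coeff, sh_coeff_of_le _ h]
  · rw [sh_coeff_zero _ (by omega), dmap_coeff, sh_coeff_zero _ (by omega), map_zero]

lemma xiL_mul_sh (k : ℤ) (x : NLSL) :
    xiL * sh k x = sh k (xiL * x) + CL (x.coeff (k + 1)) := by
  apply dmap_ext; intro n
  rw [xiL_mul_coeff, HahnSeries.coeff_add]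
  rcases le_or_gt 1 n with h | h
  · rw [sh_coeff_of_le _ (by omega), sh_coeff_of_le _ h, xiL_mul_coeff]
    have hne : n ≠ 0 := by omega
    simp [CL, HahnSeries.C_apply, HahnSeries.coeff_single, hne]
    ring_nf
  · rcases eq_or_lt_of_le (show n ≤ 0 by omega) with rfl | h'
    · rw [sh_coeff_of_le _ (by omega), sh_coeff_zero _ (by omega)]
      simp [CL, HahnSeries.C_apply, HahnSeries.coeff_single]
      ring_nf
    · rw [sh_coeff_zero _ (by omega), sh_coeff_zero _ (by omega)]
      have hne : n ≠ 0 := by omega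
      simp [CL, HahnSeries.C_apply, HahnSeries.coeff_single, hne]

lemma sh_CL (k : ℤ) (hk : 1 ≤ k) (u : NLSE) : sh k (CL u) = 0 := by
  apply dmap_ext; intro n
  rcases le_or_gt 1 n with h | h
  · rw [sh_coeff_of_le _ h]
    have : n + k ≠ 0 := by omega
    simp [CL, HahnSeries.C_apply, HahnSeries.coeff_single, this]
  · rw [sh_coeff_zero _ (by omega)]; simp

end NLSAux
end
noncomputable section
namespace NLSAux
open HahnSeries

lemma der_two (d : Derivation ℂ NLSE NLSE) : d (2 : NLSE) = 0 := by
  have : (2 : NLSE) = 1 + 1 := by norm_num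
  rw [this, map_add, Derivation.map_one_eq_zero, add_zero]

lemma der_two_pow (d : Derivation ℂ NLSE NLSE) (k : ℕ) : d ((2 : NLSE) ^ k) = 0 := by
  induction k with
  | zero => simpa using d.map_one_eq_zero
  | succ k ih =>
    rw [pow_succ, Derivation.leibniz, ih, der_two, smul_zero, smul_zero, add_zero]

lemma eps_mul_epsInv : eps * epsInv = 1 := by
  rw [eps, epsInv, ← LaurentPolynomial.T_add]
  norm_num [LaurentPolynomial.T_zero]

lemma two_cancel {x : NLSE} (h : (2 : NLSE) * x = 0) : x = 0 := by
  have h2 : (2 : ℂ) • x = 0 := by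
    rw [Algebra.smul_def, map_ofNat]; exact h
  have := congrArg (fun z => (2 : ℂ)⁻¹ • z) h2
  simpa [smul_smul] using this

lemma der_epsInv (d : Derivation ℂ NLSE NLSE) (h : d eps = 0) : d epsInv = 0 := by
  have h1 : d (eps * epsInv) = 0 := by rw [eps_mul_epsInv, Derivation.map_one_eq_zero]
  rw [Derivation.leibniz, h, smul_zero, add_zero, smul_eq_mul] at h1
  have := congrArg (fun z => epsInv * z) h1
  simpa [← mul_assoc, mul_comm epsInv eps, eps_mul_epsInv] using this

lemma CL_def (u : NLSE) : CL u = HahnSeries.C u := rfl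

lemma CL_zero : CL (0 : NLSE) = 0 := map_zero (HahnSeries.C : NLSE →+* NLSL)

lemma CL_mul (u v : NLSE) : CL (u * v) = CL u * CL v := map_mul (HahnSeries.C : NLSE →+* NLSL) u v

lemma CL_one : CL (1 : NLSE) = 1 := map_one (HahnSeries.C : NLSE →+* NLSL)

lemma two_eq_CL : (2 : NLSL) = CL (2 : NLSE) :=
  (map_ofNat (HahnSeries.C : NLSE →+* NLSL) 2).symm

lemma dmap_two (d : Derivation ℂ NLSE NLSE) : dmap d (2 : NLSL) = 0 := by
  rw [two_eq_CL, dmap_CL, der_two, CL_zero]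

section Unpack
variable {del : Derivation ℂ NLSE NLSE} {a b c : NLSL}

lemma O1 (hR : IsMR del a b c) :
    CL eps * dmap del a = CL (qv 0) * c + CL (rv 0) * b := by
  obtain ⟨-, -, -, -, -, -, hM, -⟩ := hR
  have h := congrFun (congrFun hM 0) 0
  simp only [Umat, Rmat, Matrix.add_apply, Matrix.smul_apply, Matrix.map_apply,
    Matrix.sub_apply, Matrix.mul_apply, Fin.sum_univ_two, Matrix.cons_val', Matrix.cons_val_zero,
    Matrix.cons_val_one, Matrix.head_cons, Matrix.head_fin_const, Matrix.empty_val',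
    Matrix.cons_val_fin_one, Matrix.zero_apply, smul_eq_mul] at h
  simp at h
  rw [dmap_add, dmap_two, zero_add] at h
  linear_combination h

lemma O2 (hR : IsMR del a b c) :
    (2 : NLSL) * (xiL * b) = CL eps * dmap del b + 2 * (CL (qv 0) * (1 + a)) := by
  obtain ⟨-, -, -, -, -, -, hM, -⟩ := hR
  have h := congrFun (congrFun hM 0) 1
  simp only [Umat, Rmat, Matrix.add_apply, Matrix.smul_apply, Matrix.map_apply,
    Matrix.sub_apply, Matrix.mul_apply, Fin.sum_univ_two, Matrix.cons_val', Matrix.cons_val_zero,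
    Matrix.cons_val_one, Matrix.head_cons, Matrix.head_fin_const, Matrix.empty_val',
    Matrix.cons_val_fin_one, Matrix.zero_apply, smul_eq_mul] at h
  simp at h
  linear_combination -h

lemma O3 (hR : IsMR del a b c) :
    (2 : NLSL) * (xiL * c) = -(CL eps * dmap del c) - 2 * (CL (rv 0) * (1 + a)) := by
  obtain ⟨-, -, -, -, -, -, hM, -⟩ := hR
  have h := congrFun (congrFun hM 1) 0
  simp only [Umat, Rmat, Matrix.add_apply, Matrix.smul_apply, Matrix.map_apply,
    Matrix.sub_apply, Matrix.mul_apply, Fin.sum_univ_two, Matrix.cons_val', Matrix.cons_val_zero,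
    Matrix.cons_val_one, Matrix.head_cons, Matrix.head_fin_const, Matrix.empty_val',
    Matrix.cons_val_fin_one, Matrix.zero_apply, smul_eq_mul] at h
  simp at h
  linear_combination h

lemma O4 (hR : IsMR del a b c) : (2 : NLSL) * a + a * a + b * c = 0 := by
  obtain ⟨-, -, -, -, -, -, -, hdet⟩ := hR
  rw [Rmat, Matrix.det_fin_two_of] at hdet
  linear_combination -hdet

end Unpack
end NLSAux
end
noncomputable section
namespace NLSAux
open HahnSeries

lemma dmap_zero (d : Derivation ℂ NLSE NLSE) : dmap d (0 : NLSL) = 0 := by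
  apply dmap_ext; intro n; simp

lemma sh_one {k : ℤ} (hk : 1 ≤ k) : sh k (1 : NLSL) = 0 := by
  rw [← CL_one, sh_CL k hk]

lemma dmap_xiL (d : Derivation ℂ NLSE NLSE) : dmap d xiL = 0 := by
  apply dmap_ext; intro n
  rcases eq_or_ne n (-1) with rfl | h
  · simp [xiL, HahnSeries.coeff_single_same, Derivation.map_one_eq_zero]
  · simp [xiL, HahnSeries.coeff_single_of_ne h]

lemma dmap_neg' (d : Derivation ℂ NLSE NLSE) (x : NLSL) : dmap d (-x) = -(dmap d x) := by
  apply dmap_ext; intro n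
  simp

/-- candidate for `ε D_i a` -/
def Sa (b c : NLSL) (i : ℕ) : NLSL :=
  CL ((2:NLSE)^i) * (b * sh ((i:ℤ)+1) c - sh ((i:ℤ)+1) b * c)

/-- candidate for `ε D_i b` -/
def Sbb (a b : NLSL) (i : ℕ) : NLSL :=
  CL ((2:NLSE)^(i+1)) * (sh ((i:ℤ)+1) b * (1+a) - sh ((i:ℤ)+1) a * b)

/-- candidate for `ε D_i c` -/
def Scc (a c : NLSL) (i : ℕ) : NLSL :=
  CL ((2:NLSE)^(i+1)) * (sh ((i:ℤ)+1) a * c - sh ((i:ℤ)+1) c * (1+a))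

theorem flow (del : Derivation ℂ NLSE NLSE) (hdel : IsDel del) (a b c : NLSL)
    (hR : IsMR del a b c) (i : ℕ) (D : Derivation ℂ NLSE NLSE)
    (hcomm : ∀ x, D (del x) = del (D x)) (hde : D eps = 0)
    (hq : eps * D (qv 0) = (2:NLSE)^(i+1) * b.coeff ((i:ℤ)+1+1))
    (hr : eps * D (rv 0) = (2:NLSE)^(i+1) * c.coeff ((i:ℤ)+1+1)) :
    CL eps * dmap D b = Sbb a b i ∧ CL eps * dmap D c = Scc a c i := by
  have Pa : Pos a := hR.1
  have Pb : Pos b := hR.2.1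
  have Pc : Pos c := hR.2.2.1
  have o1 := O1 hR
  have o2 := O2 hR
  have o3 := O3 hR
  have o4 := O4 hR
  have hk : (1:ℤ) ≤ (i:ℤ)+1 := by omega
  have hpow : CL ((2:NLSE)^(i+1)) = 2 * CL ((2:NLSE)^i) := by
    rw [pow_succ, CL_mul, two_eq_CL]; ring
  have hq' : CL eps * CL (D (qv 0)) = CL ((2:NLSE)^(i+1)) * CL (b.coeff ((i:ℤ)+1+1)) := by
    rw [← CL_mul, hq, CL_mul]
  have hr' : CL eps * CL (D (rv 0)) = CL ((2:NLSE)^(i+1)) * CL (c.coeff ((i:ℤ)+1+1)) := by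
    rw [← CL_mul, hr, CL_mul]
  -- shifted relations
  have H1 : CL eps * dmap del (sh ((i:ℤ)+1) a)
      = CL (qv 0) * sh ((i:ℤ)+1) c + CL (rv 0) * sh ((i:ℤ)+1) b := by
    have s := congrArg (sh ((i:ℤ)+1)) o1
    rwa [sh_CL_mul, sh_add, sh_CL_mul, sh_CL_mul, sh_dmap] at s
  have H2 : 2 * (xiL * sh ((i:ℤ)+1) b)
      = CL eps * dmap del (sh ((i:ℤ)+1) b) + 2 * (CL (qv 0) * sh ((i:ℤ)+1) a)
        + 2 * CL (b.coeff ((i:ℤ)+1+1)) := by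
    have o2' := o2
    rw [two_eq_CL] at o2'
    have s := congrArg (sh ((i:ℤ)+1)) o2'
    simp only [sh_add, sh_CL_mul, sh_dmap, sh_one hk, add_zero, zero_add, mul_zero] at s
    rw [← two_eq_CL] at s
    linear_combination s + 2 * xiL_mul_sh ((i:ℤ)+1) b
  have H3 : 2 * (xiL * sh ((i:ℤ)+1) c)
      = -(CL eps * dmap del (sh ((i:ℤ)+1) c)) - 2 * (CL (rv 0) * sh ((i:ℤ)+1) a)
        + 2 * CL (c.coeff ((i:ℤ)+1+1)) := by
    have o3' := o3
    rw [two_eq_CL] at o3'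
    have s := congrArg (sh ((i:ℤ)+1)) o3'
    simp only [sh_sub, sh_neg, sh_add, sh_CL_mul, sh_dmap, sh_one hk, add_zero, zero_add,
      mul_zero] at s
    rw [← two_eq_CL] at s
    linear_combination s + 2 * xiL_mul_sh ((i:ℤ)+1) c
  -- equations satisfied by the actual D-derivatives
  have EA1 : 2 * (xiL * dmap D b)
      = CL eps * dmap del (dmap D b)
        + 2 * (CL (D (qv 0)) * (1 + a) + CL (qv 0) * dmap D a) := by
    have e := congrArg (dmap D) o2
    simp only [dmap_add, dmap_sub, dmap_neg', dmap_mul, dmap_two, dmap_one, dmap_zero,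
      dmap_xiL, dmap_CL, hde, CL_zero, zero_mul, mul_zero, zero_add, add_zero] at e
    rw [dmap_comm hcomm b] at e
    linear_combination e
  have EA2 : 2 * (xiL * dmap D c)
      = -(CL eps * dmap del (dmap D c))
        - 2 * (CL (D (rv 0)) * (1 + a) + CL (rv 0) * dmap D a) := by
    have e := congrArg (dmap D) o3
    simp only [dmap_add, dmap_sub, dmap_neg', dmap_mul, dmap_two, dmap_one, dmap_zero,
      dmap_xiL, dmap_CL, hde, CL_zero, zero_mul, mul_zero, zero_add, add_zero] at e
    rw [dmap_comm hcomm c] at e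
    linear_combination e
  have EA3 : 2 * dmap D a + (dmap D a * a + a * dmap D a)
      + (dmap D b * c + b * dmap D c) = 0 := by
    have e := congrArg (dmap D) o4
    simp only [dmap_add, dmap_sub, dmap_neg', dmap_mul, dmap_two, dmap_one, dmap_zero,
      dmap_xiL, dmap_CL, CL_zero, zero_mul, mul_zero, zero_add, add_zero] at e
    linear_combination e
  -- derivative expansions of the candidates
  have hSa : dmap del (Sa b c i)
      = CL ((2:NLSE)^i) * ((dmap del b * sh ((i:ℤ)+1) c + b * dmap del (sh ((i:ℤ)+1) c))
          - (dmap del (sh ((i:ℤ)+1) b) * c + sh ((i:ℤ)+1) b * dmap del c)) := by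
    rw [Sa, dmap_CL_mul, der_two_pow, CL_zero, zero_mul, zero_add, dmap_sub, dmap_mul, dmap_mul]
  have hSb : dmap del (Sbb a b i)
      = CL ((2:NLSE)^(i+1)) * ((dmap del (sh ((i:ℤ)+1) b) * (1+a) + sh ((i:ℤ)+1) b * dmap del a)
          - (dmap del (sh ((i:ℤ)+1) a) * b + sh ((i:ℤ)+1) a * dmap del b)) := by
    rw [Sbb, dmap_CL_mul, der_two_pow, CL_zero, zero_mul, zero_add, dmap_sub, dmap_mul, dmap_mul,
      dmap_add, dmap_one, zero_add]
  have hSc : dmap del (Scc a c i)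
      = CL ((2:NLSE)^(i+1)) * ((dmap del (sh ((i:ℤ)+1) a) * c + sh ((i:ℤ)+1) a * dmap del c)
          - (dmap del (sh ((i:ℤ)+1) c) * (1+a) + sh ((i:ℤ)+1) c * dmap del a)) := by
    rw [Scc, dmap_CL_mul, der_two_pow, CL_zero, zero_mul, zero_add, dmap_sub, dmap_mul, dmap_mul,
      dmap_add, dmap_one, zero_add]
  -- the homogeneous linear system for the differences
  have X1 : 2 * (xiL * (CL eps * dmap D b - Sbb a b i))
      = CL eps * dmap del (CL eps * dmap D b - Sbb a b i)
        + 2 * (CL (qv 0) * (CL eps * dmap D a - Sa b c i)) := by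
    rw [dmap_sub, dmap_CL_mul, hdel.2.2, CL_zero, zero_mul, zero_add, hSb, Sa, Sbb]
    linear_combination (CL eps) * EA1 + 2*(1+a)*hq' - (CL ((2:NLSE)^(i+1)))*(1+a)*H2
      + (CL ((2:NLSE)^(i+1)))*(sh ((i:ℤ)+1) a)*o2 - (CL ((2:NLSE)^(i+1)))*b*H1
      + (CL ((2:NLSE)^(i+1)))*(sh ((i:ℤ)+1) b)*o1
      - (CL (qv 0))*(b * sh ((i:ℤ)+1) c - sh ((i:ℤ)+1) b * c)*hpow
  have X2 : 2 * (xiL * (CL eps * dmap D c - Scc a c i))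
      = -(CL eps * dmap del (CL eps * dmap D c - Scc a c i))
        - 2 * (CL (rv 0) * (CL eps * dmap D a - Sa b c i)) := by
    rw [dmap_sub, dmap_CL_mul, hdel.2.2, CL_zero, zero_mul, zero_add, hSc, Sa, Scc]
    linear_combination (CL eps) * EA2 - 2*(1+a)*hr'
      - (CL ((2:NLSE)^(i+1)))*(sh ((i:ℤ)+1) a)*o3 + (CL ((2:NLSE)^(i+1)))*(1+a)*H3
      - (CL ((2:NLSE)^(i+1)))*c*H1 + (CL ((2:NLSE)^(i+1)))*(sh ((i:ℤ)+1) c)*o1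
      + (CL (rv 0))*(b * sh ((i:ℤ)+1) c - sh ((i:ℤ)+1) b * c)*hpow
  have X3 : 2 * (CL eps * dmap D a - Sa b c i)
      + 2 * (a * (CL eps * dmap D a - Sa b c i))
      + b * (CL eps * dmap D c - Scc a c i) + c * (CL eps * dmap D b - Sbb a b i) = 0 := by
    rw [Sa, Sbb, Scc]
    linear_combination (CL eps) * EA3
      - ((1+a)*(c * sh ((i:ℤ)+1) b - b * sh ((i:ℤ)+1) c))*hpow
  -- positivity of the differences
  have PDa : Pos (CL eps * dmap D a - Sa b c i) := by
    intro n hn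
    rw [HahnSeries.coeff_sub, CL_mul_coeff, dmap_coeff, Pa n hn, map_zero, mul_zero, Sa,
      CL_mul_coeff, HahnSeries.coeff_sub,
      (Pb.mul (Pos.sh _ c)) n hn, (Pos.mul (Pos.sh _ b) Pc) n hn]
    ring
  have PDb : Pos (CL eps * dmap D b - Sbb a b i) := by
    intro n hn
    have h1 : Pos (sh ((i:ℤ)+1) b * (1+a) - sh ((i:ℤ)+1) a * b) := by
      intro m hm
      rw [HahnSeries.coeff_sub, (Pos.mul (Pos.sh _ a) Pb) m hm, mul_add, mul_one,
        HahnSeries.coeff_add, Pos.sh _ b m hm, ((Pos.sh _ b).mul Pa) m hm]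
      ring
    rw [HahnSeries.coeff_sub, CL_mul_coeff, dmap_coeff, Pb n hn, map_zero, mul_zero, Sbb,
      CL_mul_coeff, h1 n hn]
    ring
  have PDc : Pos (CL eps * dmap D c - Scc a c i) := by
    intro n hn
    have h1 : Pos (sh ((i:ℤ)+1) a * c - sh ((i:ℤ)+1) c * (1+a)) := by
      intro m hm
      rw [HahnSeries.coeff_sub, (Pos.mul (Pos.sh _ a) Pc) m hm, mul_add, mul_one,
        HahnSeries.coeff_add, Pos.sh _ c m hm, ((Pos.sh _ c).mul Pa) m hm]
      ring
    rw [HahnSeries.coeff_sub, CL_mul_coeff, dmap_coeff, Pc n hn, map_zero, mul_zero, Scc,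
      CL_mul_coeff, h1 n hn]
    ring
  -- the induction
  set Da := CL eps * dmap D a - Sa b c i with hDa
  set Db := CL eps * dmap D b - Sbb a b i with hDb
  set Dc := CL eps * dmap D c - Scc a c i with hDc
  have key : ∀ N : ℕ, ∀ n : ℤ, n ≤ N → Da.coeff n = 0 ∧ Db.coeff n = 0 ∧ Dc.coeff n = 0 := by
    intro N
    induction N with
    | zero =>
      intro n hn
      have hn0 : n ≤ 0 := by exact_mod_cast hn
      exact ⟨PDa n hn0, PDb n hn0, PDc n hn0⟩
    | succ N ih =>
      intro n hn
      rcases le_or_gt n N with h | h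
      · exact ih n h
      · have hn' : n = (N:ℤ) + 1 := by push_cast at hn ⊢; omega
        subst hn'
        have hb : Db.coeff ((N:ℤ)+1) = 0 := by
          have k1 := congrArg (fun z => z.coeff (N:ℤ)) X1
          simp only [two_eq_CL, CL_mul_coeff, xiL_mul_coeff, HahnSeries.coeff_add,
            dmap_coeff] at k1
          rw [(ih (N:ℤ) le_rfl).2.1, (ih (N:ℤ) le_rfl).1, map_zero, mul_zero, mul_zero] at k1
          exact two_cancel (by linear_combination k1)
        have hc : Dc.coeff ((N:ℤ)+1) = 0 := by
          have k2 := congrArg (fun z => z.coeff (N:ℤ)) X2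
          simp only [two_eq_CL, CL_mul_coeff, xiL_mul_coeff, HahnSeries.coeff_sub,
            HahnSeries.coeff_neg, dmap_coeff] at k2
          rw [(ih (N:ℤ) le_rfl).2.2, (ih (N:ℤ) le_rfl).1, map_zero, mul_zero, mul_zero] at k2
          exact two_cancel (by linear_combination k2)
        have ha : Da.coeff ((N:ℤ)+1) = 0 := by
          have k3 := congrArg (fun z => z.coeff ((N:ℤ)+1)) X3
          simp only [two_eq_CL, CL_mul_coeff, HahnSeries.coeff_add, HahnSeries.coeff_zero] at k3
          rw [mul_coeff_eq_zero Pa (p := (N:ℤ)) (fun m hm => (ih m hm).1) (le_refl ((N:ℤ)+1)),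
            mul_coeff_eq_zero Pb (p := (N:ℤ)) (fun m hm => (ih m hm).2.2) (le_refl ((N:ℤ)+1)),
            mul_coeff_eq_zero Pc (p := (N:ℤ)) (fun m hm => (ih m hm).2.1) (le_refl ((N:ℤ)+1))]
            at k3
          have : (2:NLSE) * Da.coeff ((N:ℤ)+1) = 0 := by linear_combination k3
          exact two_cancel this
        exact ⟨ha, hb, hc⟩
  have hzero : ∀ (x : NLSL), (∀ N : ℕ, ∀ n : ℤ, n ≤ N → x.coeff n = 0) → x = 0 := by
    intro x hx
    apply dmap_ext; intro n
    rw [HahnSeries.coeff_zero]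
    rcases le_or_gt n 0 with h | h
    · exact hx 0 n (by exact_mod_cast h)
    · exact hx n.toNat n (by omega) 
  have hb0 : Db = 0 := hzero Db (fun N n hn => (key N n hn).2.1)
  have hc0 : Dc = 0 := hzero Dc (fun N n hn => (key N n hn).2.2)
  constructor
  · have h' := hb0
    rw [hDb] at h'
    exact sub_eq_zero.mp h'
  · have h' := hc0
    rw [hDc] at h'
    exact sub_eq_zero.mp h'

end NLSAux
end
noncomputable section
namespace NLSAux
open HahnSeries

/-- the symmetric core `B_{i+j+2} + Σ (B A - A B)` -/
def core (x y : NLSL) (i j : ℕ) : NLSE :=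
  y.coeff ((j:ℤ)+2+((i:ℤ)+1))
    + ∑ k ∈ Finset.Ioo (0:ℤ) ((j:ℤ)+2),
        (y.coeff (k+((i:ℤ)+1)) * x.coeff ((j:ℤ)+2-k)
          - x.coeff (k+((i:ℤ)+1)) * y.coeff ((j:ℤ)+2-k))

/-- reindexed form of the core sum -/
lemma core_eq (x y : NLSL) (i j : ℕ) :
    core x y i j = y.coeff ((i:ℤ)+(j:ℤ)+3)
      + ∑ s ∈ Finset.Ioo ((i:ℤ)+1) ((i:ℤ)+(j:ℤ)+3),
          (y.coeff s * x.coeff (((i:ℤ)+(j:ℤ)+3) - s)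
            - x.coeff s * y.coeff (((i:ℤ)+(j:ℤ)+3) - s)) := by
  rw [core]
  congr 1
  · congr 1; ring
  · refine Finset.sum_bij' (fun k _ => k + ((i:ℤ)+1)) (fun s _ => s - ((i:ℤ)+1))
      ?_ ?_ ?_ ?_ ?_
    · intro k hk
      rw [Finset.mem_Ioo] at hk ⊢
      omega
    · intro s hs
      rw [Finset.mem_Ioo] at hs ⊢
      omega
    · intro k _; ring
    · intro s _; ring
    · intro k _
      congr 2 <;> ring

lemma sum_psi_zero {M p q : ℤ} (x y : NLSL) (hpq : p + q = M - 1) (hle : p ≤ q) :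
    ∑ s ∈ Finset.Ioc p q,
        (y.coeff s * x.coeff (M - s) - x.coeff s * y.coeff (M - s)) = 0 := by
  apply Finset.sum_involution (g := fun s _ => M - s)
  · intro s hs
    rw [show M - (M - s) = s by ring]
    ring
  · intro s hs hne heq
    apply hne
    rw [heq]
    ring
  · intro s hs
    rw [Finset.mem_Ioc] at hs ⊢
    omega
  · intro s hs
    ring

lemma sum_Ioo_shift (x y : NLSL) {p q M : ℤ} (h1 : 1 ≤ p) (h2 : 1 ≤ q) (hpq : p + q = M - 1) :
    ∑ s ∈ Finset.Ioo p M,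
        (y.coeff s * x.coeff (M - s) - x.coeff s * y.coeff (M - s))
      = ∑ s ∈ Finset.Ioo q M,
          (y.coeff s * x.coeff (M - s) - x.coeff s * y.coeff (M - s)) := by
  have main : ∀ p' q' : ℤ, 1 ≤ p' → p' + q' = M - 1 → p' ≤ q' →
      ∑ s ∈ Finset.Ioo p' M,
          (y.coeff s * x.coeff (M - s) - x.coeff s * y.coeff (M - s))
        = ∑ s ∈ Finset.Ioo q' M,
            (y.coeff s * x.coeff (M - s) - x.coeff s * y.coeff (M - s)) := by
    intro p' q' h1' hpq' hle'
    have e1 : Finset.Ioo p' M = Finset.Ioc p' (M-1) := by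
      ext s; rw [Finset.mem_Ioo, Finset.mem_Ioc]; omega
    have e2 : Finset.Ioo q' M = Finset.Ioc q' (M-1) := by
      ext s; rw [Finset.mem_Ioo, Finset.mem_Ioc]; omega
    rw [e1, e2, ← Finset.Ioc_union_Ioc_eq_Ioc hle' (show q' ≤ M-1 by omega),
      Finset.sum_union (Finset.disjoint_left.2 (fun s hs1 hs2 => by
        rw [Finset.mem_Ioc] at hs1 hs2; omega)),
      sum_psi_zero x y hpq' hle', zero_add]
  rcases le_total p q with h | h
  · exact main p q h1 hpq h
  · exact (main q p h2 (by omega) h).symm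

lemma core_symm (x y : NLSL) (i j : ℕ) : core x y i j = core x y j i := by
  rw [core_eq x y i j, core_eq x y j i]
  have hM : (j:ℤ)+(i:ℤ)+3 = (i:ℤ)+(j:ℤ)+3 := by ring
  rw [hM]
  congr 1
  exact sum_Ioo_shift x y (by omega) (by omega) (by omega)

end NLSAux
end
noncomputable section
namespace NLSAux
open HahnSeries

lemma Sbb_coeff {a b : NLSL} (Pa : Pos a) (Pb : Pos b) (i j : ℕ) :
    (Sbb a b i).coeff ((j:ℤ)+2) = (2:NLSE)^(i+1) * core a b i j := by
  rw [Sbb, CL_mul_coeff]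
  congr 1
  rw [HahnSeries.coeff_sub, mul_add, mul_one, HahnSeries.coeff_add, core]
  have h1 : (sh ((i:ℤ)+1) b).coeff ((j:ℤ)+2) = b.coeff ((j:ℤ)+2+((i:ℤ)+1)) :=
    sh_coeff_of_le b (by omega)
  have h2 : (sh ((i:ℤ)+1) b * a).coeff ((j:ℤ)+2)
      = ∑ k ∈ Finset.Ioo (0:ℤ) ((j:ℤ)+2), b.coeff (k+((i:ℤ)+1)) * a.coeff ((j:ℤ)+2-k) := by
    rw [mul_coeff_sum (Pos.sh _ b) Pa]
    refine Finset.sum_congr rfl (fun k hk => ?_)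
    rw [Finset.mem_Ioo] at hk
    rw [sh_coeff_of_le b (by omega)]
  have h3 : (sh ((i:ℤ)+1) a * b).coeff ((j:ℤ)+2)
      = ∑ k ∈ Finset.Ioo (0:ℤ) ((j:ℤ)+2), a.coeff (k+((i:ℤ)+1)) * b.coeff ((j:ℤ)+2-k) := by
    rw [mul_coeff_sum (Pos.sh _ a) Pb]
    refine Finset.sum_congr rfl (fun k hk => ?_)
    rw [Finset.mem_Ioo] at hk
    rw [sh_coeff_of_le a (by omega)]
  rw [h1, h2, h3, Finset.sum_sub_distrib]
  ring

lemma Scc_coeff {a c : NLSL} (Pa : Pos a) (Pc : Pos c) (i j : ℕ) :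
    (Scc a c i).coeff ((j:ℤ)+2) = -((2:NLSE)^(i+1) * core a c i j) := by
  rw [Scc, CL_mul_coeff]
  rw [show -((2:NLSE)^(i+1) * core a c i j) = (2:NLSE)^(i+1) * (-(core a c i j)) by ring]
  congr 1
  rw [HahnSeries.coeff_sub, mul_add, mul_one, HahnSeries.coeff_add, core]
  have h1 : (sh ((i:ℤ)+1) c).coeff ((j:ℤ)+2) = c.coeff ((j:ℤ)+2+((i:ℤ)+1)) :=
    sh_coeff_of_le c (by omega)
  have h2 : (sh ((i:ℤ)+1) c * a).coeff ((j:ℤ)+2)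
      = ∑ k ∈ Finset.Ioo (0:ℤ) ((j:ℤ)+2), c.coeff (k+((i:ℤ)+1)) * a.coeff ((j:ℤ)+2-k) := by
    rw [mul_coeff_sum (Pos.sh _ c) Pa]
    refine Finset.sum_congr rfl (fun k hk => ?_)
    rw [Finset.mem_Ioo] at hk
    rw [sh_coeff_of_le c (by omega)]
  have h3 : (sh ((i:ℤ)+1) a * c).coeff ((j:ℤ)+2)
      = ∑ k ∈ Finset.Ioo (0:ℤ) ((j:ℤ)+2), a.coeff (k+((i:ℤ)+1)) * c.coeff ((j:ℤ)+2-k) := by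
    rw [mul_coeff_sum (Pos.sh _ a) Pc]
    refine Finset.sum_congr rfl (fun k hk => ?_)
    rw [Finset.mem_Ioo] at hk
    rw [sh_coeff_of_le a (by omega)]
  rw [h1, h2, h3, Finset.sum_sub_distrib]
  ring

lemma eps_cancel {u v : NLSE} (h : eps * u = eps * v) : u = v := by
  calc u = (epsInv * eps) * u := by rw [mul_comm epsInv eps, eps_mul_epsInv, one_mul]
    _ = epsInv * (eps * u) := by ring
    _ = epsInv * (eps * v) := by rw [h]
    _ = (epsInv * eps) * v := by ring
    _ = v := by rw [mul_comm epsInv eps, eps_mul_epsInv, one_mul]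

end NLSAux
end
noncomputable section
open NLSAux

/-- Lemma 2.2: the NLS derivations commute pairwise. -/
theorem nls_derivations_commute
    (del : Derivation ℂ NLSE NLSE) (hdel : IsDel del)
    (a b c : NLSL) (hR : IsMR del a b c)
    (D : ℕ → Derivation ℂ NLSE NLSE) (hD : IsNLSD del b c D) :
    ∀ i j : ℕ, ∀ x : NLSE, D i (D j x) = D j (D i x) := by
  obtain ⟨hdelq, hdelr, hdele⟩ := hdel
  obtain ⟨hcomm, hDeps, hDq, hDr⟩ := hD
  have Pa : Pos a := hR.1
  have Pb : Pos b := hR.2.1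
  have Pc : Pos c := hR.2.2.1
  have hq' : ∀ i : ℕ, eps * D i (qv 0) = (2:NLSE)^(i+1) * b.coeff ((i:ℤ)+1+1) := by
    intro i
    rw [hDq i, coA, show ((↑(i+1):ℤ) + 1) = (i:ℤ)+1+1 by push_cast; ring]
    linear_combination ((2:NLSE)^(i+1) * b.coeff ((i:ℤ)+1+1)) * eps_mul_epsInv
  have hr' : ∀ i : ℕ, eps * D i (rv 0) = (2:NLSE)^(i+1) * c.coeff ((i:ℤ)+1+1) := by
    intro i
    rw [hDr i, coA, show ((↑(i+1):ℤ) + 1) = (i:ℤ)+1+1 by push_cast; ring]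
    linear_combination ((2:NLSE)^(i+1) * c.coeff ((i:ℤ)+1+1)) * eps_mul_epsInv
  have flows : ∀ i : ℕ,
      CL eps * dmap (D i) b = Sbb a b i ∧ CL eps * dmap (D i) c = Scc a c i :=
    fun i => flow del ⟨hdelq, hdelr, hdele⟩ a b c hR i (D i) (hcomm i) (hDeps i)
      (hq' i) (hr' i)
  have keyq : ∀ i j : ℕ, eps * (eps * (D i (D j (qv 0))))
      = (2:NLSE)^(j+1) * ((2:NLSE)^(i+1) * core a b i j) := by
    intro i j
    have hcf := congrArg (fun z : NLSL => z.coeff ((j:ℤ)+2)) (flows i).1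
    simp only [CL_mul_coeff, dmap_coeff] at hcf
    rw [Sbb_coeff Pa Pb i j] at hcf
    have hu : D i ((2:NLSE)^(j+1) * epsInv) = 0 := by
      rw [Derivation.leibniz, der_two_pow, der_epsInv (D i) (hDeps i), smul_zero, smul_zero,
        add_zero]
    rw [hDq j, coA, show ((↑(j+1):ℤ) + 1) = (j:ℤ)+2 by push_cast; ring,
      Derivation.leibniz, hu, smul_zero, add_zero, smul_eq_mul]
    linear_combination (eps * ((2:NLSE)^(j+1) * epsInv)) * hcf
      + ((2:NLSE)^(j+1) * ((2:NLSE)^(i+1) * core a b i j)) * eps_mul_epsInv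
  have keyr : ∀ i j : ℕ, eps * (eps * (D i (D j (rv 0))))
      = -((2:NLSE)^(j+1) * ((2:NLSE)^(i+1) * core a c i j)) := by
    intro i j
    have hcf := congrArg (fun z : NLSL => z.coeff ((j:ℤ)+2)) (flows i).2
    simp only [CL_mul_coeff, dmap_coeff] at hcf
    rw [Scc_coeff Pa Pc i j] at hcf
    have hu : D i ((2:NLSE)^(j+1) * epsInv) = 0 := by
      rw [Derivation.leibniz, der_two_pow, der_epsInv (D i) (hDeps i), smul_zero, smul_zero,
        add_zero]
    rw [hDr j, coA, show ((↑(j+1):ℤ) + 1) = (j:ℤ)+2 by push_cast; ring,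
      Derivation.leibniz, hu, smul_zero, add_zero, smul_eq_mul]
    linear_combination (eps * ((2:NLSE)^(j+1) * epsInv)) * hcf
      - ((2:NLSE)^(j+1) * ((2:NLSE)^(i+1) * core a c i j)) * eps_mul_epsInv
  have commq : ∀ i j : ℕ, D i (D j (qv 0)) = D j (D i (qv 0)) := by
    intro i j
    apply eps_cancel; apply eps_cancel
    rw [keyq i j, keyq j i, core_symm a b i j]
    ring
  have commr : ∀ i j : ℕ, D i (D j (rv 0)) = D j (D i (rv 0)) := by
    intro i j
    apply eps_cancel; apply eps_cancel
    rw [keyr i j, keyr j i, core_symm a c i j]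
    ring
  -- commute with iterates of del
  have iterC : ∀ (i k : ℕ) (x : NLSE), D i (del^[k] x) = del^[k] (D i x) := by
    intro i k
    induction k with
    | zero => intro x; simp
    | succ k ih =>
      intro x
      rw [Function.iterate_succ_apply', Function.iterate_succ_apply', hcomm i, ih]
  have qv_it : ∀ k : ℕ, qv k = del^[k] (qv 0) := by
    intro k
    induction k with
    | zero => rfl
    | succ k ih =>
      rw [Function.iterate_succ_apply', ← ih]
      exact (hdelq k).symm
  have rv_it : ∀ k : ℕ, rv k = del^[k] (rv 0) := by
    intro k
    induction k with
    | zero => rfl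
    | succ k ih =>
      rw [Function.iterate_succ_apply', ← ih]
      exact (hdelr k).symm
  intro i j
  have commqk : ∀ k : ℕ, D i (D j (qv k)) = D j (D i (qv k)) := by
    intro k
    rw [qv_it k, iterC j k (qv 0), iterC i k (D j (qv 0)), commq i j,
      ← iterC j k (D i (qv 0)), ← iterC i k (qv 0)]
  have commrk : ∀ k : ℕ, D i (D j (rv k)) = D j (D i (rv k)) := by
    intro k
    rw [rv_it k, iterC j k (rv 0), iterC i k (D j (rv 0)), commr i j,
      ← iterC j k (D i (rv 0)), ← iterC i k (rv 0)]
  -- closure properties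
  have Padd : ∀ x y : NLSE, D i (D j x) = D j (D i x) → D i (D j y) = D j (D i y) →
      D i (D j (x + y)) = D j (D i (x + y)) := by
    intro x y hx hy
    simp only [map_add, hx, hy]
  have Pmul : ∀ x y : NLSE, D i (D j x) = D j (D i x) → D i (D j y) = D j (D i y) →
      D i (D j (x * y)) = D j (D i (x * y)) := by
    intro x y hx hy
    simp only [Derivation.leibniz, smul_eq_mul, map_add]
    linear_combination x * hy + y * hx
  have Pone : D i (D j (1 : NLSE)) = D j (D i (1 : NLSE)) := by
    rw [Derivation.map_one_eq_zero, Derivation.map_one_eq_zero, map_zero, map_zero]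
  have Peps : D i (D j eps) = D j (D i eps) := by
    rw [hDeps j, hDeps i, map_zero, map_zero]
  have PepsInv : D i (D j epsInv) = D j (D i epsInv) := by
    rw [der_epsInv (D j) (hDeps j), der_epsInv (D i) (hDeps i), map_zero, map_zero]
  have PT : ∀ n : ℤ, D i (D j (LaurentPolynomial.T n : NLSE)) =
      D j (D i (LaurentPolynomial.T n : NLSE)) := by
    intro n
    induction n using Int.induction_on with
    | zero => rw [LaurentPolynomial.T_zero]; exact Pone
    | succ k ihk =>
      rw [LaurentPolynomial.T_add]
      exact Pmul _ _ ihk Peps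
    | pred k ihk =>
      rw [show (-(k:ℤ) - 1) = (-(k:ℤ)) + (-1) by ring, LaurentPolynomial.T_add]
      exact Pmul _ _ ihk PepsInv
  have PC : ∀ p : NLSA, D i (D j (LaurentPolynomial.C p : NLSE)) =
      D j (D i (LaurentPolynomial.C p : NLSE)) := by
    intro p
    induction p using MvPolynomial.induction_on with
    | C r =>
      have hcc : (LaurentPolynomial.C (MvPolynomial.C r) : NLSE) = algebraMap ℂ NLSE r := by
        rw [LaurentPolynomial.algebraMap_apply, MvPolynomial.algebraMap_eq]
      rw [hcc, Derivation.map_algebraMap, map_zero, Derivation.map_algebraMap, map_zero]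
    | add p q hp hq =>
      rw [map_add]
      exact Padd _ _ hp hq
    | mul_X p v hp =>
      rw [map_mul]
      refine Pmul _ _ hp ?_
      cases v with
      | q k => exact commqk k
      | r k => exact commrk k
  intro x
  induction x using LaurentPolynomial.induction_on' with
  | add p q hp hq => exact Padd p q hp hq
  | C_mul_T n p => exact Pmul _ _ (PC p) (PT n)

end
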